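/- Let T_k denote the convex hull of k independent uniform random points in the triangle T with vertices (0,0), (0,1), (1,0), together with the two points (0,1) and (1,0), and let f₀(T_k) be its number of vertices. Using Buchta's formulas E f₀(T_k) = (2/3)H_k + 7/3 and Var f₀(T_k) = (10/27)H_k + (4/9)H_k^{(2)} − 28/27 + 4/(9(k+1)), if χ is a homogeneous Poisson point process on T with E(#χ) = M > 1 and T_χ = [χ, (0,1), (1,0)], then E f₀(T_χ) = (2/3) log M + (2γ+7)/3 + O(M^{−1/2}) as M → ∞. -/

import Mathlib

/-- The `n`-th harmonic number `H_n = ∑_{i=1}^n 1/i` (with `H_0 = 0`). -/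
noncomputable def harmonicR (n : ℕ) : ℝ := ∑ i ∈ Finset.range n, (1 : ℝ) / (i + 1)

open Real

namespace PoissonChainAux

lemma harmonicR_eq (n : ℕ) : harmonicR n = ((harmonic n : ℚ) : ℝ) := by
  unfold harmonicR harmonic
  push_cast
  simp [one_div]

lemma harmonicR_nonneg (n : ℕ) : 0 ≤ harmonicR n := by
  unfold harmonicR
  exact Finset.sum_nonneg fun i _ => by positivity

lemma harmonicR_le (n : ℕ) : harmonicR n ≤ n := by
  calc harmonicR n ≤ ∑ _i ∈ Finset.range n, (1:ℝ) := by
        apply Finset.sum_le_sum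
        intro i _
        rw [div_le_one (by positivity)]
        have : (0:ℝ) ≤ i := Nat.cast_nonneg i
        linarith
    _ = n := by simp

lemma harmonic_gamma_bound (k : ℕ) :
    |harmonicR k - Real.log ((k:ℝ)+1) - Real.eulerMascheroniConstant| ≤ 2/((k:ℝ)+1) := by
  have hγ1 : 1/2 < Real.eulerMascheroniConstant := Real.one_half_lt_eulerMascheroniConstant
  have hγ2 : Real.eulerMascheroniConstant < 2/3 := Real.eulerMascheroniConstant_lt_two_thirds
  rcases Nat.eq_zero_or_pos k with rfl | hk
  · simp only [harmonicR, Finset.range_zero, Finset.sum_empty, Nat.cast_zero, zero_add,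
      Real.log_one, zero_sub, zero_sub]
    rw [abs_of_nonpos (by linarith)]
    norm_num
    linarith
  · have hk1 : (1:ℝ) ≤ (k:ℝ) := by exact_mod_cast hk
    have h1 := Real.eulerMascheroniSeq_lt_eulerMascheroniConstant k
    have h2 := Real.eulerMascheroniConstant_lt_eulerMascheroniSeq' k
    rw [Real.eulerMascheroniSeq] at h1
    rw [Real.eulerMascheroniSeq', if_neg hk.ne'] at h2
    rw [← harmonicR_eq] at h1 h2
    have hlog : Real.log ((k:ℝ)+1) - Real.log (k:ℝ) ≤ 1/(k:ℝ) := by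
      have h3 : Real.log ((k:ℝ)+1) - Real.log (k:ℝ) = Real.log (((k:ℝ)+1)/(k:ℝ)) := by
        rw [Real.log_div (by linarith) (by linarith)]
      rw [h3]
      have h4 := Real.log_le_sub_one_of_pos (x := ((k:ℝ)+1)/(k:ℝ)) (by positivity)
      have h5 : ((k:ℝ)+1)/(k:ℝ) - 1 = 1/(k:ℝ) := by field_simp; ring
      linarith
    have hdiv : 1/(k:ℝ) ≤ 2/((k:ℝ)+1) := by
      rw [div_le_div_iff₀ (by linarith) (by linarith)]
      linarith
    rw [abs_le]
    constructor
    · have : 0 ≤ 2/((k:ℝ)+1) := by positivity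
      linarith
    · linarith

lemma log_diff_bound {M a : ℝ} (hM : 1 < M) (ha : 1 ≤ a) :
    |Real.log a - Real.log M| ≤ ((a-M)^2+M)/(M*Real.sqrt M) + (a-M)^2/(a*M) := by
  have hM0 : 0 < M := by linarith
  have ha0 : 0 < a := by linarith
  have hs0 : 0 < Real.sqrt M := Real.sqrt_pos.mpr hM0
  have hs2 : Real.sqrt M * Real.sqrt M = M := Real.mul_self_sqrt hM0.le
  have key : |a - M| / M ≤ ((a-M)^2+M)/(M*Real.sqrt M) := by
    rw [div_le_div_iff₀ hM0 (by positivity)]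
    have h0 : 0 ≤ (|a - M| - Real.sqrt M)^2 := sq_nonneg _
    have habs : |a-M|^2 = (a-M)^2 := sq_abs _
    nlinarith [abs_nonneg (a - M), hs0, hM0]
  have h2nn : 0 ≤ (a-M)^2/(a*M) := by positivity
  rcases le_or_gt M a with h | h
  · rw [abs_of_nonneg (sub_nonneg.mpr (Real.log_le_log hM0 h))]
    have h1 : Real.log a - Real.log M = Real.log (a / M) := (Real.log_div (by positivity) (by positivity)).symm
    have h2 : Real.log (a / M) ≤ a / M - 1 := Real.log_le_sub_one_of_pos (by positivity)
    have h3 : a / M - 1 = (a - M)/M := by field_simp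
    have h4 : (a-M)/M = |a-M|/M := by rw [abs_of_nonneg (by linarith)]
    linarith
  · rw [abs_of_nonpos (sub_nonpos.mpr (Real.log_le_log ha0 h.le))]
    have h1 : Real.log M - Real.log a = Real.log (M / a) := (Real.log_div (by positivity) (by positivity)).symm
    have h2 : Real.log (M / a) ≤ M / a - 1 := Real.log_le_sub_one_of_pos (by positivity)
    have h3 : M / a - 1 = (M - a)/a := by field_simp
    have heq : (M-a)/a = (M-a)/M + (M-a)^2/(a*M) := by field_simp; ring
    have h4 : (M-a)/M = |a-M|/M := by rw [abs_of_nonpos (by linarith), neg_sub]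
    have h6 : (M-a)^2/(a*M) = (a-M)^2/(a*M) := by ring_nf
    linarith [key]


noncomputable def pois (M : ℝ) (k : ℕ) : ℝ := M ^ k * Real.exp (-M) / Nat.factorial k

variable {M : ℝ}

lemma pois_pos (hM : 0 < M) (k : ℕ) : 0 < pois M k := by
  unfold pois
  positivity

lemma pois_eq (k : ℕ) : pois M k = Real.exp (-M) * (M ^ k / Nat.factorial k) := by
  unfold pois; ring

lemma summable_pois : Summable (pois M) :=
  ((Real.summable_pow_div_factorial M).mul_left (Real.exp (-M))).congr
    fun k => (pois_eq k).symm

lemma tsum_pois : ∑' k, pois M k = 1 := by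
  have h1 : ∑' k : ℕ, pois M k = Real.exp (-M) * ∑' k : ℕ, M ^ k / Nat.factorial k := by
    rw [← tsum_mul_left]
    exact tsum_congr fun k => pois_eq k
  have h2 : ∑' k : ℕ, M ^ k / (Nat.factorial k : ℝ) = Real.exp M := by
    rw [Real.exp_eq_exp_ℝ, NormedSpace.exp_eq_tsum_div]
  rw [h1, h2, ← Real.exp_add]
  simp

lemma summable_pois_mul_nat (hM : 0 < M) : Summable (fun k => pois M k * (k:ℝ)) := by
  refine Summable.of_nonneg_of_le (fun k => by have := pois_pos hM k; positivity)
    (fun k => ?_) ((Real.summable_pow_div_factorial (2*M)).mul_left (Real.exp (-M)))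
  have hk : (k:ℝ) ≤ 2 ^ k := by exact_mod_cast (Nat.lt_two_pow_self (n := k)).le
  have hfac : (0:ℝ) < (Nat.factorial k : ℝ) := by positivity
  have h1 : pois M k * (k:ℝ) = Real.exp (-M) * (M ^ k * (k:ℝ)) / (Nat.factorial k) := by
    unfold pois; ring
  have h2 : Real.exp (-M) * ((2*M) ^ k / (Nat.factorial k)) =
      Real.exp (-M) * ((2:ℝ) ^ k * M ^ k) / (Nat.factorial k) := by
    rw [mul_pow]; ring
  rw [h1, h2]
  gcongr Real.exp (-M) * ?_ / _
  calc M ^ k * (k:ℝ) ≤ M ^ k * 2 ^ k := by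
        have : (0:ℝ) ≤ M ^ k := by positivity
        exact mul_le_mul_of_nonneg_left hk this
    _ = (2:ℝ) ^ k * M ^ k := by ring

lemma summable_pois_mul_sq (hM : 0 < M) : Summable (fun k => pois M k * (k:ℝ)^2) := by
  refine Summable.of_nonneg_of_le (fun k => by have := pois_pos hM k; positivity)
    (fun k => ?_) ((Real.summable_pow_div_factorial (4*M)).mul_left (Real.exp (-M)))
  have hk : (k:ℝ) ≤ 2 ^ k := by exact_mod_cast (Nat.lt_two_pow_self (n := k)).le
  have hk2 : (k:ℝ)^2 ≤ 4 ^ k := by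
    have h1 : ((2:ℝ) ^ k)^2 = 4 ^ k := by
      rw [← pow_mul, mul_comm, pow_mul]
      norm_num
    have := pow_le_pow_left₀ (Nat.cast_nonneg k : (0:ℝ) ≤ k) hk 2
    calc (k:ℝ)^2 ≤ ((2:ℝ)^k)^2 := this
      _ = 4 ^ k := h1
  have h1 : pois M k * (k:ℝ)^2 = Real.exp (-M) * (M ^ k * (k:ℝ)^2) / (Nat.factorial k) := by
    unfold pois; ring
  have h2 : Real.exp (-M) * ((4*M) ^ k / (Nat.factorial k)) =
      Real.exp (-M) * ((4:ℝ) ^ k * M ^ k) / (Nat.factorial k) := by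
    rw [mul_pow]; ring
  rw [h1, h2]
  gcongr Real.exp (-M) * ?_ / _
  calc M ^ k * (k:ℝ)^2 ≤ M ^ k * 4 ^ k := by
        have : (0:ℝ) ≤ M ^ k := by positivity
        exact mul_le_mul_of_nonneg_left hk2 this
    _ = (4:ℝ) ^ k * M ^ k := by ring

lemma pois_succ (hM : 0 < M) (k : ℕ) : pois M (k+1) * ((k:ℝ)+1) = M * pois M k := by
  unfold pois
  rw [Nat.factorial_succ]
  have h1 : ((k:ℝ)+1) ≠ 0 := by positivity
  have h2 : ((Nat.factorial k : ℕ):ℝ) ≠ 0 := by positivity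
  push_cast
  field_simp
  ring

lemma tsum_pois_mul_nat (hM : 0 < M) : ∑' k, pois M k * (k:ℝ) = M := by
  rw [Summable.tsum_eq_zero_add (summable_pois_mul_nat hM)]
  simp only [Nat.cast_zero, mul_zero, zero_add]
  calc (∑' k : ℕ, pois M (k+1) * ((k+1 : ℕ):ℝ))
      = ∑' k : ℕ, M * pois M k := by
        refine tsum_congr fun k => ?_
        push_cast
        exact pois_succ hM k
    _ = M := by rw [tsum_mul_left, tsum_pois, mul_one]

lemma tsum_pois_mul_sq (hM : 0 < M) : ∑' k, pois M k * (k:ℝ)^2 = M^2 + M := by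
  rw [Summable.tsum_eq_zero_add (summable_pois_mul_sq hM)]
  simp only [Nat.cast_zero, zero_pow, mul_zero, zero_add, ne_eq, OfNat.ofNat_ne_zero,
    not_false_eq_true]
  calc (∑' k : ℕ, pois M (k+1) * ((k+1 : ℕ):ℝ)^2)
      = ∑' k : ℕ, (M * (pois M k * (k:ℝ)) + M * pois M k) := by
        refine tsum_congr fun k => ?_
        have h := pois_succ hM k
        push_cast
        nlinarith [h]
    _ = M * (∑' k, pois M k * (k:ℝ)) + M * (∑' k, pois M k) := by
        rw [Summable.tsum_add ((summable_pois_mul_nat hM).mul_left M) (summable_pois.mul_left M),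
          tsum_mul_left, tsum_mul_left]
    _ = M^2 + M := by rw [tsum_pois_mul_nat hM, tsum_pois]; ring

lemma summable_central (hM : 0 < M) :
    Summable (fun k => pois M k * ((k:ℝ) - M)^2) := by
  have e : ∀ k : ℕ, pois M k * (k:ℝ)^2 - (2*M) * (pois M k * (k:ℝ)) + M^2 * pois M k
      = pois M k * ((k:ℝ) - M)^2 := fun k => by ring
  exact ((((summable_pois_mul_sq hM).sub ((summable_pois_mul_nat hM).mul_left (2*M))).add
    (summable_pois.mul_left (M^2))).congr e)

lemma tsum_central (hM : 0 < M) : ∑' k, pois M k * ((k:ℝ) - M)^2 = M := by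
  have e : ∀ k : ℕ, pois M k * ((k:ℝ) - M)^2
      = pois M k * (k:ℝ)^2 - (2*M) * (pois M k * (k:ℝ)) + M^2 * pois M k := fun k => by ring
  rw [tsum_congr e,
    Summable.tsum_add (((summable_pois_mul_sq hM).sub ((summable_pois_mul_nat hM).mul_left (2*M))))
      (summable_pois.mul_left (M^2)),
    Summable.tsum_sub (summable_pois_mul_sq hM) ((summable_pois_mul_nat hM).mul_left (2*M)),
    tsum_mul_left, tsum_mul_left, tsum_pois_mul_sq hM, tsum_pois_mul_nat hM, tsum_pois]
  ring

lemma summable_central1 (hM : 0 < M) :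
    Summable (fun k => pois M k * ((k:ℝ) + 1 - M)^2) := by
  have e : ∀ k : ℕ, pois M k * (k:ℝ)^2 + (2*(1-M)) * (pois M k * (k:ℝ)) + (1-M)^2 * pois M k
      = pois M k * ((k:ℝ) + 1 - M)^2 := fun k => by ring
  exact ((((summable_pois_mul_sq hM).add ((summable_pois_mul_nat hM).mul_left (2*(1-M)))).add
    (summable_pois.mul_left ((1-M)^2))).congr e)

lemma tsum_central1 (hM : 0 < M) : ∑' k, pois M k * ((k:ℝ) + 1 - M)^2 = M + 1 := by
  have e : ∀ k : ℕ, pois M k * ((k:ℝ) + 1 - M)^2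
      = pois M k * (k:ℝ)^2 + (2*(1-M)) * (pois M k * (k:ℝ)) + (1-M)^2 * pois M k :=
    fun k => by ring
  rw [tsum_congr e,
    Summable.tsum_add (((summable_pois_mul_sq hM).add ((summable_pois_mul_nat hM).mul_left (2*(1-M)))))
      (summable_pois.mul_left ((1-M)^2)),
    Summable.tsum_add (summable_pois_mul_sq hM) ((summable_pois_mul_nat hM).mul_left (2*(1-M))),
    tsum_mul_left, tsum_mul_left, tsum_pois_mul_sq hM, tsum_pois_mul_nat hM, tsum_pois]
  ring

lemma pois_shift (hM : 0 < M) (k : ℕ) (x : ℝ) :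
    pois M k * (x / ((k:ℝ)+1)) = (pois M (k+1) * x) * (1/M) := by
  unfold pois
  rw [Nat.factorial_succ]
  have h1 : ((k:ℝ)+1) ≠ 0 := by positivity
  have h2 : ((Nat.factorial k : ℕ):ℝ) ≠ 0 := by positivity
  have h3 : M ≠ 0 := hM.ne'
  push_cast
  field_simp
  ring

lemma tsum_pois_succ_le (hM : 0 < M) : ∑' k : ℕ, pois M (k+1) ≤ 1 := by
  have h := Summable.tsum_eq_zero_add (summable_pois (M := M))
  rw [tsum_pois] at h
  have h0 := pois_pos hM 0
  linarith

lemma tsum_pois_succ_sq_le (hM : 0 < M) :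
    ∑' k : ℕ, pois M (k+1) * ((k:ℝ)+1-M)^2 ≤ M := by
  have h := Summable.tsum_eq_zero_add (summable_central hM)
  rw [tsum_central hM] at h
  have e : (∑' k : ℕ, pois M (k+1) * (((k+1:ℕ):ℝ)-M)^2)
      = ∑' k : ℕ, pois M (k+1) * ((k:ℝ)+1-M)^2 :=
    tsum_congr fun k => by push_cast; ring
  rw [e] at h
  have h0 : 0 ≤ pois M 0 * ((0:ℝ) - M)^2 := by
    have := pois_pos hM 0; positivity
  have h0' : 0 ≤ pois M 0 * (((0:ℕ):ℝ) - M)^2 := by push_cast; exact h0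
  linarith

lemma shiftA (hM : 0 < M) : ∑' k : ℕ, pois M k * (1/((k:ℝ)+1)) ≤ 1/M := by
  have e : ∀ k : ℕ, pois M k * (1/((k:ℝ)+1)) = (pois M (k+1) * 1) * (1/M) :=
    fun k => pois_shift hM k 1
  rw [tsum_congr e, tsum_mul_right]
  simp only [mul_one]
  calc (∑' k : ℕ, pois M (k+1)) * (1/M) ≤ 1 * (1/M) := by
        exact mul_le_mul_of_nonneg_right (tsum_pois_succ_le hM) (by positivity)
    _ = 1/M := one_mul _

lemma shiftB (hM : 0 < M) :
    ∑' k : ℕ, pois M k * (((k:ℝ)+1-M)^2/((k:ℝ)+1)) ≤ 1 := by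
  have e : ∀ k : ℕ, pois M k * (((k:ℝ)+1-M)^2/((k:ℝ)+1))
      = (pois M (k+1) * ((k:ℝ)+1-M)^2) * (1/M) :=
    fun k => pois_shift hM k _
  rw [tsum_congr e, tsum_mul_right]
  calc (∑' k : ℕ, pois M (k+1) * ((k:ℝ)+1-M)^2) * (1/M) ≤ M * (1/M) := by
        exact mul_le_mul_of_nonneg_right (tsum_pois_succ_sq_le hM) (by positivity)
    _ = 1 := by field_simp

end PoissonChainAux

open PoissonChainAux in
/-- Expectation of the vertex number of the Poisson random convex chain `T_χ` in the
canonical triangle with intensity of total mass `M > 1`. Conditionally on `#χ = k`,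
`E f₀(T_χ) = (2/3) H_k + 7/3` (Buchta's formula), so `E f₀(T_χ)` is the Poisson(M)
mixture of these values, and it equals `(2/3) log M + (2γ+7)/3 + O(M^{-1/2})` as
`M → ∞`. -/
theorem poisson_chain_expectation :
    ∃ C > 0, ∀ M : ℝ, 1 < M →
      |(∑' k : ℕ, (M ^ k * Real.exp (-M) / Nat.factorial k) *
            ((2 / 3) * harmonicR k + 7 / 3))
          - ((2 / 3) * Real.log M + (2 * Real.eulerMascheroniConstant + 7) / 3)|
        ≤ C / Real.sqrt M := by
  refine ⟨10, by norm_num, fun M hM => ?_⟩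
  have hM0 : 0 < M := by linarith
  set s := Real.sqrt M with hsdef
  have hs0 : 0 < s := Real.sqrt_pos.mpr hM0
  have hsM : s ≤ M := by
    have h := Real.sqrt_le_sqrt (show M ≤ M^2 by nlinarith)
    rwa [Real.sqrt_sq hM0.le] at h
  set γ := Real.eulerMascheroniConstant with hγdef
  set L : ℝ := Real.log M + γ with hLdef
  -- summability facts
  have sp : Summable (pois M) := summable_pois
  have spn : Summable (fun k => pois M k * (k:ℝ)) := summable_pois_mul_nat hM0
  have sc1 : Summable (fun k => pois M k * ((k:ℝ) + 1 - M)^2) := summable_central1 hM0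
  have sH : Summable (fun k => pois M k * harmonicR k) := by
    refine Summable.of_nonneg_of_le
      (fun k => mul_nonneg (pois_pos hM0 k).le (harmonicR_nonneg k)) (fun k => ?_) spn
    exact mul_le_mul_of_nonneg_left (harmonicR_le k) (pois_pos hM0 k).le
  -- the three bounding series
  set t1 : ℕ → ℝ := fun k => pois M k * (2/((k:ℝ)+1)) with ht1
  set t2 : ℕ → ℝ := fun k => pois M k * ((((k:ℝ)+1-M)^2+M)/(M*s)) with ht2
  set t3 : ℕ → ℝ := fun k => pois M k * (((k:ℝ)+1-M)^2/(((k:ℝ)+1)*M)) with ht3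
  have st1 : Summable t1 := by
    refine Summable.of_nonneg_of_le (fun k => by have := pois_pos hM0 k; positivity)
      (fun k => ?_) (sp.mul_left 2)
    have h1 : 2/((k:ℝ)+1) ≤ 2 := by
      rw [div_le_iff₀ (by positivity)]
      have : (0:ℝ) ≤ (k:ℝ) := Nat.cast_nonneg k
      nlinarith
    calc pois M k * (2/((k:ℝ)+1)) ≤ pois M k * 2 :=
          mul_le_mul_of_nonneg_left h1 (pois_pos hM0 k).le
      _ = 2 * pois M k := by ring
  have st2 : Summable t2 := by
    refine ((sc1.add (sp.mul_left M)).mul_right (1/(M*s))).congr fun k => ?_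
    simp only [ht2]
    field_simp
  have st3 : Summable t3 := by
    refine Summable.of_nonneg_of_le (fun k => by have := pois_pos hM0 k; positivity)
      (fun k => ?_) (sc1.mul_right (1/M))
    have hk1 : (1:ℝ) ≤ (k:ℝ)+1 := by
      have : (0:ℝ) ≤ (k:ℝ) := Nat.cast_nonneg k
      linarith
    have h1 : ((k:ℝ)+1-M)^2/(((k:ℝ)+1)*M) ≤ ((k:ℝ)+1-M)^2 * (1/M) := by
      rw [div_le_iff₀ (by positivity)]
      have expand : ((k:ℝ)+1-M)^2 * (1/M) * (((k:ℝ)+1)*M) = ((k:ℝ)+1-M)^2 * ((k:ℝ)+1) := by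
        field_simp
        try ring
      rw [expand]
      nlinarith [sq_nonneg ((k:ℝ)+1-M)]
    calc pois M k * (((k:ℝ)+1-M)^2/(((k:ℝ)+1)*M))
        ≤ pois M k * (((k:ℝ)+1-M)^2 * (1/M)) :=
          mul_le_mul_of_nonneg_left h1 (pois_pos hM0 k).le
      _ = pois M k * ((k:ℝ)+1-M)^2 * (1/M) := by ring
  -- pointwise master bound
  have master : ∀ k : ℕ, |pois M k * (harmonicR k - L)| ≤ t1 k + t2 k + t3 k := by
    intro k
    have hk1 : (1:ℝ) ≤ (k:ℝ)+1 := by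
      have : (0:ℝ) ≤ (k:ℝ) := Nat.cast_nonneg k
      linarith
    have hb : |harmonicR k - L|
        ≤ 2/((k:ℝ)+1) + ((((k:ℝ)+1-M)^2+M)/(M*s) + ((k:ℝ)+1-M)^2/(((k:ℝ)+1)*M)) := by
      have htri : |harmonicR k - L|
          ≤ |harmonicR k - Real.log ((k:ℝ)+1) - γ| + |Real.log ((k:ℝ)+1) - Real.log M| := by
        have e : harmonicR k - L
            = (harmonicR k - Real.log ((k:ℝ)+1) - γ) + (Real.log ((k:ℝ)+1) - Real.log M) := by
          rw [hLdef]; ring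
        rw [e]
        exact abs_add_le _ _
      have h1 := harmonic_gamma_bound k
      have h2 := log_diff_bound hM hk1
      rw [← hγdef] at h1
      rw [← hsdef] at h2
      have e2 : ((((k:ℝ)+1)-M)^2+M)/(M*s) = (((k:ℝ)+1-M)^2+M)/(M*s) := by ring_nf
      have e3 : (((k:ℝ)+1)-M)^2/((((k:ℝ)+1))*M) = ((k:ℝ)+1-M)^2/(((k:ℝ)+1)*M) := by ring_nf
      rw [e2, e3] at h2
      linarith [htri, h1, h2]
    have hpb : pois M k * (2/((k:ℝ)+1) + ((((k:ℝ)+1-M)^2+M)/(M*s) + ((k:ℝ)+1-M)^2/(((k:ℝ)+1)*M)))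
        = t1 k + t2 k + t3 k := by
      simp only [ht1, ht2, ht3]
      ring
    calc |pois M k * (harmonicR k - L)| = pois M k * |harmonicR k - L| := by
          rw [abs_mul, abs_of_pos (pois_pos hM0 k)]
      _ ≤ pois M k * (2/((k:ℝ)+1) + ((((k:ℝ)+1-M)^2+M)/(M*s) + ((k:ℝ)+1-M)^2/(((k:ℝ)+1)*M))) :=
          mul_le_mul_of_nonneg_left hb (pois_pos hM0 k).le
      _ = t1 k + t2 k + t3 k := hpb
  -- summability of the difference series and of its abs
  have sAbs : Summable (fun k => |pois M k * (harmonicR k - L)|) :=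
    Summable.of_nonneg_of_le (fun k => abs_nonneg _) master ((st1.add st2).add st3)
  -- bounds on the three tsums
  have bt1 : ∑' k, t1 k ≤ 2/M := by
    have e : ∀ k : ℕ, t1 k = 2 * (pois M k * (1/((k:ℝ)+1))) := fun k => by
      simp only [ht1]; ring
    rw [tsum_congr e, tsum_mul_left]
    have h := shiftA (M := M) hM0
    have e2 : (2:ℝ)/M = 2*(1/M) := by ring
    rw [e2]
    linarith
  have bt2 : ∑' k, t2 k ≤ 3/s := by
    have e : ∀ k : ℕ, t2 k
        = (pois M k * ((k:ℝ)+1-M)^2) * (1/(M*s)) + pois M k * (M * (1/(M*s))) := fun k => by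
      simp only [ht2]
      field_simp
    rw [tsum_congr e, Summable.tsum_add (sc1.mul_right _) (sp.mul_right _), tsum_mul_right,
      tsum_mul_right, tsum_central1 hM0, tsum_pois]
    have hMs : 0 < M * s := by positivity
    have e2 : (M+1) * (1/(M*s)) + 1 * (M * (1/(M*s))) = (2*M+1) / (M*s) := by
      field_simp
      try ring
    rw [e2, div_le_div_iff₀ hMs hs0]
    nlinarith
  have bt3 : ∑' k, t3 k ≤ 1/M := by
    have e : ∀ k : ℕ, t3 k = (pois M k * (((k:ℝ)+1-M)^2/((k:ℝ)+1))) * (1/M) := fun k => by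
      simp only [ht3]
      field_simp
      try ring
    rw [tsum_congr e, tsum_mul_right]
    calc (∑' k : ℕ, pois M k * (((k:ℝ)+1-M)^2/((k:ℝ)+1))) * (1/M) ≤ 1 * (1/M) :=
          mul_le_mul_of_nonneg_right (shiftB hM0) (by positivity)
      _ = 1/M := one_mul _
  -- main rearrangement
  have step1 : (∑' k : ℕ, pois M k * ((2/3) * harmonicR k + 7/3))
      = (2/3) * (∑' k, pois M k * harmonicR k) + 7/3 := by
    have e : ∀ k : ℕ, pois M k * ((2/3) * harmonicR k + 7/3)
        = (2/3) * (pois M k * harmonicR k) + (7/3) * pois M k := fun k => by ring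
    rw [tsum_congr e, Summable.tsum_add (sH.mul_left _) (sp.mul_left _), tsum_mul_left, tsum_mul_left,
      tsum_pois]
    ring
  have step2 : (∑' k : ℕ, pois M k * harmonicR k) - L
      = ∑' k : ℕ, pois M k * (harmonicR k - L) := by
    have e : ∀ k : ℕ, pois M k * (harmonicR k - L)
        = pois M k * harmonicR k - L * pois M k := fun k => by ring
    rw [tsum_congr e, Summable.tsum_sub sH (sp.mul_left L), tsum_mul_left, tsum_pois, mul_one]
  have hshow : (∑' k : ℕ, (M ^ k * Real.exp (-M) / Nat.factorial k) *
        ((2 / 3) * harmonicR k + 7 / 3))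
      = ∑' k : ℕ, pois M k * ((2/3) * harmonicR k + 7/3) := rfl
  rw [hshow, step1]
  have hrearr : (2/3) * (∑' k, pois M k * harmonicR k) + 7/3
      - ((2 / 3) * Real.log M + (2 * γ + 7) / 3)
      = (2/3) * ((∑' k, pois M k * harmonicR k) - L) := by
    rw [hLdef]; ring
  rw [hrearr, step2]
  rw [abs_mul, abs_of_pos (by norm_num : (0:ℝ) < 2/3)]
  have habs : |∑' k : ℕ, pois M k * (harmonicR k - L)| ≤ ∑' k, (t1 k + t2 k + t3 k) := by
    calc |∑' k : ℕ, pois M k * (harmonicR k - L)|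
        ≤ ∑' k : ℕ, |pois M k * (harmonicR k - L)| := by
          have sN : Summable (fun k => ‖pois M k * (harmonicR k - L)‖) := by
            simp only [Real.norm_eq_abs]
            exact sAbs
          have h := norm_tsum_le_tsum_norm sN
          rw [Real.norm_eq_abs] at h
          simp only [Real.norm_eq_abs] at h
          exact h
      _ ≤ ∑' k, (t1 k + t2 k + t3 k) := Summable.tsum_le_tsum master sAbs ((st1.add st2).add st3)
  have hsum3 : ∑' k, (t1 k + t2 k + t3 k) ≤ 6/s := by
    rw [Summable.tsum_add (st1.add st2) st3, Summable.tsum_add st1 st2]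
    have h1M : 1/M ≤ 1/s := one_div_le_one_div_of_le hs0 hsM
    have h2M : 2/M ≤ 2/s := by
      rw [div_le_div_iff₀ hM0 hs0]; nlinarith
    have h6 : (6:ℝ)/s = 2/s + 3/s + 1/s := by ring
    rw [h6]
    linarith [bt1, bt2, bt3]
  calc (2/3) * |∑' k : ℕ, pois M k * (harmonicR k - L)| ≤ (2/3) * (6/s) := by
        have h := le_trans habs hsum3
        nlinarith [abs_nonneg (∑' k : ℕ, pois M k * (harmonicR k - L))]
    _ = 4/s := by ring
    _ ≤ 10/s := by
      rw [div_le_div_iff₀ hs0 hs0]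
      nlinarith
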